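/- arXiv:1912.07561 — 4 statements merged into one kernel-verified Lean document; each statement's English description precedes it below -/
import Mathlib

section
/- For every separable binary classification task on ℝ^d and every ε ≥ 0, AR(ε) = S(2ε). -/
open MeasureTheory Metric Set
open scoped ENNReal NNReal

noncomputable section

/-- The Euclidean space `ℝ^d` with the `ℓ₂` metric. -/
abbrev Euc (d : ℕ) := EuclideanSpace ℝ (Fin d)

/-- A (binary) classifier: a measurable function with values in `{-1, 1}`. -/
def IsClassifier {d : ℕ} (f : Euc d → ℝ) : Prop :=
  Measurable f ∧ ∀ x, f x = 1 ∨ f x = -1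

/-- The (standard) risk `R(f) = ℙ_{X ∼ 𝒟}(f(X) ≠ h(X))` of a classifier `f`
with respect to the data distribution `𝒟` and the ground truth `h`. -/
def risk {d : ℕ} (𝒟 : Measure (Euc d)) (h f : Euc d → ℝ) : ℝ≥0∞ :=
  𝒟 {x | f x ≠ h x}

/-- The adversarial risk
`AR(f,ε) = ℙ_{X ∼ 𝒟}(∃ η, ‖η‖₂ < ε ∧ f(X+η) ≠ h(X))`. -/
def advRisk {d : ℕ} (𝒟 : Measure (Euc d)) (h f : Euc d → ℝ) (ε : ℝ) : ℝ≥0∞ :=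
  𝒟 {x | ∃ η : Euc d, ‖η‖ < ε ∧ f (x + η) ≠ h x}

/-- `AR(ε)`: the infimum of the adversarial risk over all measurable classifiers. -/
def optAdvRisk {d : ℕ} (𝒟 : Measure (Euc d)) (h : Euc d → ℝ) (ε : ℝ) : ℝ≥0∞ :=
  ⨅ (f : Euc d → ℝ) (_ : IsClassifier f), advRisk 𝒟 h f ε

/-- The `ℓ₂` distance between two sets, as an extended nonnegative real
(`∞` if one of the sets is empty). -/
def setEDist {d : ℕ} (A B : Set (Euc d)) : ℝ≥0∞ :=
  ⨅ a ∈ A, ⨅ b ∈ B, edist a b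

/-- The separation function `S(ε)`: the infimum, over measurable sets `E` whose
removal separates the two classes `M₋ = h⁻¹({-1})` and `M₊ = h⁻¹({1})` by
distance at least `ε`, of the probability mass of `E`. -/
def sep {d : ℕ} (𝒟 : Measure (Euc d)) (h : Euc d → ℝ) (ε : ℝ) : ℝ≥0∞ :=
  ⨅ (E : Set (Euc d)) (_ : MeasurableSet E)
    (_ : ENNReal.ofReal ε ≤ setEDist (h ⁻¹' {-1} \ E) (h ⁻¹' {1} \ E)), 𝒟 E

-- Direction 1 auxiliary
lemma dir1 {d : ℕ} (𝒟 : Measure (Euc d)) (h : Euc d → ℝ) (hh : IsClassifier h)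
    (ε : ℝ) (hε : 0 ≤ ε) (E : Set (Euc d)) (hE : MeasurableSet E)
    (hsep : ENNReal.ofReal (2 * ε) ≤ setEDist (h ⁻¹' {-1} \ E) (h ⁻¹' {1} \ E)) :
    optAdvRisk 𝒟 h ε ≤ 𝒟 E := by
  classical
  set S : Set (Euc d) := h ⁻¹' {1} \ E with hS
  set f : Euc d → ℝ := fun x => if EMetric.infEdist x S < ENNReal.ofReal ε then 1 else -1 with hf
  have hfc : IsClassifier f := by
    constructor
    · have hmeas : MeasurableSet {x : Euc d | EMetric.infEdist x S < ENNReal.ofReal ε} := by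
        have : IsOpen {x : Euc d | EMetric.infEdist x S < ENNReal.ofReal ε} :=
          isOpen_lt (EMetric.continuous_infEdist) continuous_const
        exact this.measurableSet
      exact Measurable.ite hmeas measurable_const measurable_const
    · intro x
      by_cases hx : EMetric.infEdist x S < ENNReal.ofReal ε <;> simp [hf, hx]
  have hsub : {x : Euc d | ∃ η : Euc d, ‖η‖ < ε ∧ f (x + η) ≠ h x} ⊆ E := by
    intro x hx
    obtain ⟨η, hη, hne⟩ := hx
    by_contra hxE
    have hεpos : 0 < ε := lt_of_le_of_lt (norm_nonneg η) hη
    rcases hh.2 x with hx1 | hx1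
    · -- h x = 1, so x ∈ S, and f (x + η) = 1
      have hxS : x ∈ S := ⟨by simp [hx1], hxE⟩
      have hlt : EMetric.infEdist (x + η) S < ENNReal.ofReal ε := by
        refine lt_of_le_of_lt (EMetric.infEdist_le_edist_of_mem hxS) ?_
        rw [edist_lt_ofReal, dist_eq_norm, add_sub_cancel_left]
        exact hη
      apply hne
      rw [hx1, hf]
      simp [hlt]
    · -- h x = -1, so x ∈ M₋ \ E
      have hxm : x ∈ h ⁻¹' {-1} \ E := ⟨by simp [hx1], hxE⟩
      have hfval : f (x + η) = 1 := by
        rcases hfc.2 (x + η) with h1 | h1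
        · exact h1
        · exact absurd (h1.trans hx1.symm) hne
      have hlt : EMetric.infEdist (x + η) S < ENNReal.ofReal ε := by
        by_contra hc
        rw [hf] at hfval
        simp only [if_neg hc] at hfval
        norm_num at hfval
      obtain ⟨b, hbS, hb⟩ := EMetric.infEdist_lt_iff.mp hlt
      have h1 : edist x b < ENNReal.ofReal (2 * ε) := by
        calc edist x b ≤ edist x (x + η) + edist (x + η) b := edist_triangle _ _ _
          _ < ENNReal.ofReal ε + ENNReal.ofReal ε := by
              apply ENNReal.add_lt_add
              · rw [edist_lt_ofReal, dist_eq_norm]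
                simpa using hη
              · exact hb
          _ = ENNReal.ofReal (2 * ε) := by
              rw [← ENNReal.ofReal_add hε hε]; ring_nf
      have h2 : setEDist (h ⁻¹' {-1} \ E) (h ⁻¹' {1} \ E) ≤ edist x b := by
        refine le_trans (iInf₂_le x hxm) (iInf₂_le b hbS)
      exact absurd (lt_of_le_of_lt (le_trans hsep h2) h1) (lt_irrefl _)
  calc optAdvRisk 𝒟 h ε ≤ advRisk 𝒟 h f ε := iInf₂_le f hfc
    _ ≤ 𝒟 E := measure_mono hsub

-- Direction 2 auxiliary
lemma dir2 {d : ℕ} (𝒟 : Measure (Euc d)) (h : Euc d → ℝ) (hh : IsClassifier h)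
    (ε : ℝ) (hε : 0 ≤ ε) (f : Euc d → ℝ) (hf : IsClassifier f) :
    sep 𝒟 h (2 * ε) ≤ advRisk 𝒟 h f ε := by
  classical
  set E : Set (Euc d) :=
    (h ⁻¹' {1} ∩ thickening ε (f ⁻¹' {-1})) ∪ (h ⁻¹' {-1} ∩ thickening ε (f ⁻¹' {1})) with hE
  have hEm : MeasurableSet E := by
    apply MeasurableSet.union <;>
      exact (hh.1 (measurableSet_singleton _)).inter isOpen_thickening.measurableSet
  have hsepE : ENNReal.ofReal (2 * ε) ≤ setEDist (h ⁻¹' {-1} \ E) (h ⁻¹' {1} \ E) := by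
    refine le_iInf₂ fun a ha => le_iInf₂ fun b hb => ?_
    by_contra hc
    push_neg at hc
    have hd : dist a b < 2 * ε := by
      rw [edist_lt_ofReal] at hc; exact hc
    set m := midpoint ℝ a b with hm
    have hdam : dist a m < ε := by
      rw [hm, dist_left_midpoint]
      have : ‖(2:ℝ)‖⁻¹ = 2⁻¹ := by norm_num
      rw [this]; linarith
    have hdbm : dist b m < ε := by
      rw [hm, dist_right_midpoint]
      have : ‖(2:ℝ)‖⁻¹ = 2⁻¹ := by norm_num
      rw [this]; linarith [dist_comm a b ▸ hd]
    rcases hf.2 m with hfm | hfm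
    · -- f m = 1, so a ∈ E
      have : a ∈ E := Or.inr ⟨ha.1, mem_thickening_iff.mpr ⟨m, hfm, hdam⟩⟩
      exact ha.2 this
    · have : b ∈ E := Or.inl ⟨hb.1, mem_thickening_iff.mpr ⟨m, hfm, hdbm⟩⟩
      exact hb.2 this
  have hsub : E ⊆ {x : Euc d | ∃ η : Euc d, ‖η‖ < ε ∧ f (x + η) ≠ h x} := by
    rintro x (⟨hx1, hx2⟩ | ⟨hx1, hx2⟩)
    · obtain ⟨z, hz, hdz⟩ := mem_thickening_iff.mp hx2
      refine ⟨z - x, ?_, ?_⟩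
      · rw [← dist_eq_norm']; exact hdz
      · rw [add_sub_cancel]
        simp only [mem_preimage, mem_singleton_iff] at hz hx1
        rw [hz, hx1]; norm_num
    · obtain ⟨z, hz, hdz⟩ := mem_thickening_iff.mp hx2
      refine ⟨z - x, ?_, ?_⟩
      · rw [← dist_eq_norm']; exact hdz
      · rw [add_sub_cancel]
        simp only [mem_preimage, mem_singleton_iff] at hz hx1
        rw [hz, hx1]; norm_num
  calc sep 𝒟 h (2 * ε) ≤ 𝒟 E :=
        iInf_le_of_le E (iInf_le_of_le hEm (iInf_le_of_le hsepE le_rfl))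
    _ ≤ _ := measure_mono hsub

/-- Lemma 1: for every separable binary classification task on `ℝ^d` and every
`ε ≥ 0`, `AR(ε) = S(2ε)`. -/
theorem stmt2 (d : ℕ) (𝒟 : Measure (Euc d)) [IsProbabilityMeasure 𝒟]
    (h : Euc d → ℝ) (hh : IsClassifier h) (ε : ℝ) (hε : 0 ≤ ε) :
    optAdvRisk 𝒟 h ε = sep 𝒟 h (2 * ε) := by
  apply le_antisymm
  · exact le_iInf₂ fun E hE => le_iInf fun hs => dir1 𝒟 h hh ε hε E hE hs
  · exact le_iInf₂ fun f hf => dir2 𝒟 h hh ε hε f hf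
end
end

section
/- Let (M,dist) be a metric space with ε-doubling dimension dd, and let N ⊆ M be a set whose points have pairwise distances at least r. Then for every point x ∈ M and every radius t with r ≤ t ≤ ε, the ball B_t(x) contains at most 2^{dd·⌈log₂(2t/r)⌉} points of N. -/
open MeasureTheory Metric Set
open scoped ENNReal NNReal

noncomputable section

private lemma encard_biUnion_le' {M : Type*} (T : Finset M) (f : M → Set M) (C : ℕ∞)
    (h : ∀ y ∈ T, (f y).encard ≤ C) :
    (⋃ y ∈ T, f y).encard ≤ (T.card : ℕ∞) * C := by
  classical
  induction T using Finset.induction_on with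
  | empty => simp
  | @insert a T ha ih =>
    rw [Finset.set_biUnion_insert]
    calc (f a ∪ ⋃ y ∈ T, f y).encard ≤ (f a).encard + (⋃ y ∈ T, f y).encard :=
          Set.encard_union_le _ _
      _ ≤ C + (T.card : ℕ∞) * C := by
          gcongr
          · exact h a (Finset.mem_insert_self _ _)
          · exact ih fun y hy => h y (Finset.mem_insert_of_mem hy)
      _ = ((T.card + 1 : ℕ) : ℕ∞) * C := by
          push_cast; ring
      _ = _ := by rw [Finset.card_insert_of_notMem ha]

private lemma aux_count {M : Type*} [MetricSpace M] (ε : ℝ) (dd : ℕ)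
    (hdd : ∀ (x : M) (s : ℝ), 0 < s → s ≤ ε →
      ∃ T : Finset M, T.card ≤ 2 ^ dd ∧ ball x s ⊆ ⋃ y ∈ T, ball y (s / 2))
    (N : Set M) (r : ℝ) (hr : 0 < r)
    (hN : N.Pairwise fun a b => r ≤ dist a b) :
    ∀ k : ℕ, ∀ (x : M) (s : ℝ), 0 < s → s ≤ ε → s ≤ r / 2 * 2 ^ k →
      (N ∩ ball x s).encard ≤ ((2 ^ (dd * k) : ℕ) : ℕ∞) := by
  intro k
  induction k with
  | zero =>
    intro x s hs hsε hsr
    simp only [pow_zero, mul_one, Nat.mul_zero] at hsr ⊢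
    rw [Nat.cast_one]
    apply Set.encard_le_one_iff.mpr
    rintro a b ⟨haN, ha⟩ ⟨hbN, hb⟩
    by_contra hab
    have := hN haN hbN hab
    have : dist a b < r := by
      calc dist a b ≤ dist a x + dist x b := dist_triangle _ _ _
        _ < s + s := by
            rw [mem_ball] at ha hb
            rw [dist_comm x b]
            linarith
        _ ≤ r := by linarith
    linarith [hN haN hbN hab]
  | succ k ih =>
    intro x s hs hsε hsr
    obtain ⟨T, hTcard, hTcov⟩ := hdd x s hs hsε
    have hsub : N ∩ ball x s ⊆ ⋃ y ∈ T, N ∩ ball y (s / 2) := by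
      rintro a ⟨haN, hab⟩
      obtain ⟨y, hy⟩ := Set.mem_iUnion.mp (hTcov hab)
      simp only [Set.mem_iUnion] at hy ⊢
      obtain ⟨hyT, hya⟩ := hy
      exact ⟨y, hyT, haN, hya⟩
    calc (N ∩ ball x s).encard ≤ (⋃ y ∈ T, N ∩ ball y (s / 2)).encard :=
          Set.encard_mono hsub
      _ ≤ (T.card : ℕ∞) * ((2 ^ (dd * k) : ℕ) : ℕ∞) := by
          apply encard_biUnion_le'
          intro y _
          apply ih y (s / 2) (by linarith) (by linarith)
          rw [pow_succ] at hsr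
          linarith
      _ ≤ ((2 ^ dd : ℕ) : ℕ∞) * ((2 ^ (dd * k) : ℕ) : ℕ∞) := by
          exact mul_le_mul_left (by exact_mod_cast hTcard) _
      _ = ((2 ^ (dd * (k + 1)) : ℕ) : ℕ∞) := by
          rw [← Nat.cast_mul, ← pow_add]
          congr 1
          ring

/-- Lemma 2: let `(M, dist)` be a metric space whose `ε`-doubling dimension is
`dd`, i.e. every ball of radius at most `ε` can be covered by `2^dd` balls of
half the radius. If all pairwise distances in `N ⊆ M` are at least `r`, then
for any `x ∈ M` and any radius `t` with `r ≤ t ≤ ε`, the ball `B_t(x)` contains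
at most `2^(dd * ⌈log₂(2t/r)⌉)` points of `N`. -/
theorem stmt5 (M : Type*) [MetricSpace M] (ε : ℝ) (dd : ℕ)
    (hdd : ∀ (x : M) (s : ℝ), 0 < s → s ≤ ε →
      ∃ T : Finset M, T.card ≤ 2 ^ dd ∧ ball x s ⊆ ⋃ y ∈ T, ball y (s / 2))
    (N : Set M) (r : ℝ) (hr : 0 < r)
    (hN : N.Pairwise fun a b => r ≤ dist a b)
    (x : M) (t : ℝ) (hrt : r ≤ t) (htε : t ≤ ε) :
    (N ∩ ball x t).encard ≤
      ((2 ^ (dd * ⌈Real.logb 2 (2 * t / r)⌉₊) : ℕ) : ℕ∞) := by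
  set k := ⌈Real.logb 2 (2 * t / r)⌉₊ with hk
  apply aux_count ε dd hdd N r hr hN k x t (lt_of_lt_of_le hr hrt) htε
  have ht : (0:ℝ) < t := lt_of_lt_of_le hr hrt
  have hx : (0:ℝ) < 2 * t / r := by positivity
  have h1 : Real.logb 2 (2 * t / r) ≤ (k : ℝ) := Nat.le_ceil _
  have h2 : 2 * t / r ≤ (2:ℝ) ^ (k : ℝ) := by
    rwa [Real.logb_le_iff_le_rpow (by norm_num) hx] at h1
  rw [Real.rpow_natCast] at h2
  rw [div_le_iff₀ hr] at h2
  nlinarith [pow_pos (by norm_num : (0:ℝ) < 2) k]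
end
end

section
/- Let d ≥ 1 and ε > 0. For every β > 2√d, the random cube partition of ℝ^d with parameter ε is (ε, β, 2d^{3/2}/β)-padded: every block has ℓ₂-diameter ε, and for every x ∈ ℝ^d, ℙ_{v∼U([0,ε/√d]^d)}[ B_{ε/β}(x) ⊄ π_v(x) ] ≤ 2d^{3/2}/β. -/
open MeasureTheory Metric Set
open scoped ENNReal NNReal

noncomputable section

/-- The block of the cube partition with side `s` and shift `v` containing the
point `x`: the set of points lying in the same half-open cube of the shifted
lattice `v + s·ℤ^d` as `x`.  (Assigning each boundary point to the cube first
crossed by the ray `x + α(1,…,1)`, `α ≥ 0`, amounts exactly to using the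
half-open cubes `∏ᵢ [v i + s kᵢ, v i + s (kᵢ+1))`.) -/
def cubeBlock (d : ℕ) (s : ℝ) (v : Fin d → ℝ) (x : Euc d) : Set (Euc d) :=
  {y | ∀ i, ⌊(y i - v i) / s⌋ = ⌊(x i - v i) / s⌋}

/-- The uniform probability measure on the fundamental box `[0,s]^d`
(the distribution of the random shift of the cube partition). -/
def boxMeasure (d : ℕ) (s : ℝ) : Measure (Fin d → ℝ) :=
  (volume (Set.pi Set.univ fun _ : Fin d => Set.Icc (0 : ℝ) s))⁻¹ •
    volume.restrict (Set.pi Set.univ fun _ : Fin d => Set.Icc (0 : ℝ) s)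


theorem floor_div_eq_iff (s t : ℝ) (k : ℤ) (hs : 0 < s) :
    ⌊t / s⌋ = k ↔ s * k ≤ t ∧ t < s * (k + 1) := by
  rw [Int.floor_eq_iff]
  constructor
  · rintro ⟨h1, h2⟩
    refine ⟨by rwa [le_div_iff₀ hs, mul_comm] at h1, ?_⟩
    rw [div_lt_iff₀ hs] at h2; push_cast at h2 ⊢; linarith
  · rintro ⟨h1, h2⟩
    refine ⟨by rwa [le_div_iff₀ hs, mul_comm], ?_⟩
    rw [div_lt_iff₀ hs]; push_cast at h2 ⊢; linarith

theorem mem_cubeBlock_iff (d : ℕ) (s : ℝ) (hs : 0 < s) (v : Fin d → ℝ) (x : Euc d)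
    (y : Euc d) : y ∈ cubeBlock d s v x ↔
      ∀ i, v i + s * ⌊(x i - v i) / s⌋ ≤ y i ∧ y i < v i + s * ⌊(x i - v i) / s⌋ + s := by
  unfold cubeBlock
  simp only [Set.mem_setOf_eq]
  refine forall_congr' fun i => ?_
  rw [floor_div_eq_iff _ _ _ hs]
  constructor <;> rintro ⟨h1, h2⟩ <;> constructor <;> push_cast at * <;> linarith

theorem diam_cubeBlock (d : ℕ) (s : ℝ) (hs : 0 < s) (v : Fin d → ℝ) (x : Euc d) :
    EMetric.diam (cubeBlock d s v x) = ENNReal.ofReal (Real.sqrt d * s) := by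
  set K : Fin d → ℝ := fun i => v i + s * ⌊(x i - v i) / s⌋ with hK
  have hd0 : (0:ℝ) ≤ d := Nat.cast_nonneg d
  apply le_antisymm
  · apply EMetric.diam_le
    intro y hy z hz
    rw [mem_cubeBlock_iff d s hs] at hy hz
    rw [edist_dist]
    apply ENNReal.ofReal_le_ofReal
    rw [EuclideanSpace.dist_eq]
    have hsum : ∑ i, dist (y i) (z i) ^ 2 ≤ ∑ _i : Fin d, s ^ 2 := by
      apply Finset.sum_le_sum
      intro i _
      have h1 := (hy i).1; have h2 := (hy i).2
      have h3 := (hz i).1; have h4 := (hz i).2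
      have : |y i - z i| ≤ s := by rw [abs_le]; constructor <;> linarith
      calc dist (y i) (z i) ^ 2 = |y i - z i| ^ 2 := by rw [Real.dist_eq]
        _ ≤ s ^ 2 := by nlinarith [abs_nonneg (y i - z i)]
    calc Real.sqrt (∑ i, dist (y i) (z i) ^ 2) ≤ Real.sqrt (∑ _i : Fin d, s ^ 2) :=
          Real.sqrt_le_sqrt hsum
      _ = Real.sqrt (d * s ^ 2) := by rw [Finset.sum_const, Finset.card_univ,
          Fintype.card_fin, nsmul_eq_mul]
      _ = Real.sqrt d * s := by
          rw [Real.sqrt_mul hd0, Real.sqrt_sq hs.le]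
  · apply ENNReal.le_of_forall_pos_le_add
    intro δ hδ _
    set η : ℝ := min s (δ / Real.sqrt d) with hη
    have hsd : (0:ℝ) < Real.sqrt d ∨ d = 0 := by
      rcases Nat.eq_zero_or_pos d with h | h
      · exact Or.inr h
      · exact Or.inl (Real.sqrt_pos.mpr (by exact_mod_cast h))
    rcases hsd with hsd | hd0'
    swap
    · -- d = 0 : sqrt d = 0, everything trivial
      subst hd0'
      simp
    have hη0 : 0 < η := lt_min hs (div_pos (by exact_mod_cast hδ) hsd)
    have hηs : η ≤ s := min_le_left _ _
    set y : Euc d := WithLp.toLp 2 (fun i => K i) with hy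
    set z : Euc d := WithLp.toLp 2 (fun i => K i + (s - η)) with hz
    have hymem : y ∈ cubeBlock d s v x := by
      rw [mem_cubeBlock_iff d s hs]
      intro i
      exact ⟨le_refl _, by show K i < K i + s; linarith⟩
    have hzmem : z ∈ cubeBlock d s v x := by
      rw [mem_cubeBlock_iff d s hs]
      intro i
      constructor
      · show K i ≤ K i + (s - η); linarith
      · show K i + (s - η) < K i + s; linarith
    have hdist : dist y z = Real.sqrt d * (s - η) := by
      rw [EuclideanSpace.dist_eq]
      have : ∀ i : Fin d, dist (y i) (z i) ^ 2 = (s - η) ^ 2 := by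
        intro i
        have : dist (y i) (z i) = s - η := by
          rw [Real.dist_eq]
          show |K i - (K i + (s - η))| = s - η
          rw [abs_sub_comm]
          rw [add_sub_cancel_left, abs_of_nonneg (by linarith)]
        rw [this]
      simp_rw [this]
      rw [Finset.sum_const, Finset.card_univ, Fintype.card_fin, nsmul_eq_mul,
        Real.sqrt_mul hd0, Real.sqrt_sq (by linarith)]
    have hle : ENNReal.ofReal (Real.sqrt d * (s - η)) ≤ EMetric.diam (cubeBlock d s v x) := by
      have := EMetric.edist_le_diam_of_mem hymem hzmem
      rwa [edist_dist, hdist] at this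
    calc ENNReal.ofReal (Real.sqrt d * s)
        = ENNReal.ofReal (Real.sqrt d * (s - η) + Real.sqrt d * η) := by ring_nf
      _ ≤ ENNReal.ofReal (Real.sqrt d * (s - η)) + ENNReal.ofReal (Real.sqrt d * η) :=
          ENNReal.ofReal_add_le
      _ ≤ EMetric.diam (cubeBlock d s v x) + ↑δ := by
          apply add_le_add hle
          rw [← ENNReal.ofReal_coe_nnreal]
          apply ENNReal.ofReal_le_ofReal
          have : η ≤ δ / Real.sqrt d := min_le_right _ _
          calc Real.sqrt d * η ≤ Real.sqrt d * (δ / Real.sqrt d) := by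
                apply mul_le_mul_of_nonneg_left this hsd.le
            _ = δ := by field_simp


theorem exists_lattice (s r u u' : ℝ) (hs : 0 < s)
    (h : ⌊u' / s⌋ ≠ ⌊u / s⌋) (hlt : |u' - u| < r) : ∃ k : ℤ, |u - s * k| < r := by
  have habs := abs_lt.mp hlt
  rcases lt_trichotomy u' u with hc | hc | hc
  · refine ⟨⌊u / s⌋, ?_⟩
    have hle : ⌊u' / s⌋ ≤ ⌊u / s⌋ :=
      Int.floor_le_floor (div_le_div_of_nonneg_right hc.le hs.le)
    have hlt2 : ⌊u' / s⌋ < ⌊u / s⌋ := lt_of_le_of_ne hle h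
    have h1 : u' / s < (⌊u / s⌋ : ℝ) := by
      have := Int.lt_floor_add_one (u' / s)
      have h2 : ((⌊u' / s⌋ : ℝ) + 1) ≤ (⌊u / s⌋ : ℝ) := by exact_mod_cast hlt2
      linarith
    have h2 : (⌊u / s⌋ : ℝ) ≤ u / s := Int.floor_le _
    rw [div_lt_iff₀ hs] at h1
    rw [le_div_iff₀ hs] at h2
    rw [abs_lt]; constructor <;> linarith
  · exact absurd (by rw [hc]) h
  · refine ⟨⌊u / s⌋ + 1, ?_⟩
    have hle : ⌊u / s⌋ ≤ ⌊u' / s⌋ :=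
      Int.floor_le_floor (div_le_div_of_nonneg_right hc.le hs.le)
    have hlt2 : ⌊u / s⌋ < ⌊u' / s⌋ := lt_of_le_of_ne hle (Ne.symm h)
    have h1 : ((⌊u / s⌋ : ℝ) + 1) ≤ u' / s := by
      have h2 : ((⌊u / s⌋ : ℝ) + 1) ≤ (⌊u' / s⌋ : ℝ) := by exact_mod_cast hlt2
      have := Int.floor_le (u' / s)
      linarith
    have h2 : u / s < (⌊u / s⌋ : ℝ) + 1 := Int.lt_floor_add_one _
    rw [le_div_iff₀ hs] at h1
    rw [div_lt_iff₀ hs] at h2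
    rw [abs_lt]; push_cast; constructor <;> linarith

theorem coord_dist_le (d : ℕ) (y x : Euc d) (i : Fin d) : dist (y i) (x i) ≤ dist y x := by
  rw [EuclideanSpace.dist_eq]
  have h1 : dist (y i) (x i) = Real.sqrt (dist (y i) (x i) ^ 2) := by
    rw [Real.sqrt_sq dist_nonneg]
  rw [h1]
  apply Real.sqrt_le_sqrt
  exact Finset.single_le_sum (f := fun j => dist (y j) (x j) ^ 2)
    (fun j _ => sq_nonneg _) (Finset.mem_univ i)


theorem oneDim (s r c : ℝ) (hs : 0 < s) (hr : 0 < r) (hrs : 2 * r ≤ s) :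
    volume {w : ℝ | w ∈ Icc 0 s ∧ ∃ k : ℤ, |c - w - s * k| < r} ≤ ENNReal.ofReal (2 * r) := by
  set p : ℝ := c - s * ⌊c / s⌋ with hp
  have hp0 : 0 ≤ p := by
    have h := Int.floor_le (c / s)
    rw [le_div_iff₀ hs] at h
    simp only [hp]; linarith [h]
  have hps : p < s := by
    have h := Int.lt_floor_add_one (c / s)
    rw [div_lt_iff₀ hs] at h
    simp only [hp]; nlinarith [h]
  have hsub : {w : ℝ | w ∈ Icc 0 s ∧ ∃ k : ℤ, |c - w - s * k| < r} ⊆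
      Icc (max (p - r) 0) (min (p + r) s) ∪ (Ioc (p + s - r) s ∪ Ico 0 (p + r - s)) := by
    rintro w ⟨⟨hw0, hws⟩, k, hk⟩
    have habs := abs_lt.mp hk
    have hcj : c - s * k = p + s * ((⌊c / s⌋ - k : ℤ) : ℝ) := by push_cast; ring
    set j : ℤ := ⌊c / s⌋ - k with hj
    have key1 : -r < p + s * (j : ℝ) - w := by linarith [habs.1, hcj]
    have key2 : p + s * (j : ℝ) - w < r := by linarith [habs.2, hcj]
    have hjub : (j : ℝ) < 2 := by nlinarith
    have hjlb : (-2 : ℝ) < (j : ℝ) := by nlinarith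
    have hj2 : j < 2 := by exact_mod_cast hjub
    have hj1 : -2 < j := by exact_mod_cast hjlb
    interval_cases j
    · -- j = -1
      refine Or.inr (Or.inr ⟨hw0, ?_⟩)
      push_cast at key1
      linarith
    · -- j = 0
      push_cast at key1 key2
      exact Or.inl ⟨max_le (by linarith) hw0, le_min (by linarith) hws⟩
    · -- j = 1
      refine Or.inr (Or.inl ⟨?_, hws⟩)
      push_cast at key2
      linarith
  calc volume {w : ℝ | w ∈ Icc 0 s ∧ ∃ k : ℤ, |c - w - s * k| < r}
      ≤ volume (Icc (max (p - r) 0) (min (p + r) s) ∪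
          (Ioc (p + s - r) s ∪ Ico 0 (p + r - s))) := measure_mono hsub
    _ ≤ volume (Icc (max (p - r) 0) (min (p + r) s)) +
          (volume (Ioc (p + s - r) s) + volume (Ico 0 (p + r - s))) :=
        le_trans (measure_union_le _ _) (by gcongr; exact measure_union_le _ _)
    _ = ENNReal.ofReal (min (p + r) s - max (p - r) 0) +
          (ENNReal.ofReal (s - (p + s - r)) + ENNReal.ofReal (p + r - s - 0)) := by
        rw [Real.volume_Icc, Real.volume_Ioc, Real.volume_Ico]
    _ ≤ ENNReal.ofReal (2 * r) := by
        set A : ℝ := min (p + r) s - max (p - r) 0 with hA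
        have hBr : max (r - p) 0 ≤ r := max_le (by linarith) hr.le
        have hCr : max (p + r - s) 0 ≤ r := max_le (by linarith) hr.le
        have hsum : A + max (r - p) 0 + max (p + r - s) 0 = 2 * r := by
          rcases le_total (p - r) 0 with h | h
          · rw [hA, max_eq_right h, max_eq_left (by linarith : (0:ℝ) ≤ r - p),
              min_eq_left (by linarith : p + r ≤ s), max_eq_right (by linarith : p + r - s ≤ 0)]
            ring
          · rw [hA, max_eq_left h, max_eq_right (by linarith : r - p ≤ 0)]
            rcases le_total (p + r) s with h2 | h2
            · rw [min_eq_left h2, max_eq_right (by linarith : p + r - s ≤ 0)]; ring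
            · rw [min_eq_right h2, max_eq_left (by linarith : (0:ℝ) ≤ p + r - s)]; ring
        have hA0 : 0 ≤ A := by linarith
        calc ENNReal.ofReal A + (ENNReal.ofReal (s - (p + s - r)) + ENNReal.ofReal (p + r - s - 0))
            ≤ ENNReal.ofReal A + (ENNReal.ofReal (max (r - p) 0) +
                ENNReal.ofReal (max (p + r - s) 0)) :=
              add_le_add le_rfl (add_le_add
                (ENNReal.ofReal_le_ofReal (by linarith [le_max_left (r - p) (0:ℝ)]))
                (ENNReal.ofReal_le_ofReal (by linarith [le_max_left (p + r - s) (0:ℝ)])))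
          _ = ENNReal.ofReal (A + max (r - p) 0 + max (p + r - s) 0) := by
              rw [← ENNReal.ofReal_add (le_max_right _ _) (le_max_right _ _),
                ← ENNReal.ofReal_add hA0 (by positivity), add_assoc]
          _ = ENNReal.ofReal (2 * r) := by rw [hsum]

theorem boxMeasure_bad_le (d : ℕ) (hd : 1 ≤ d) (s r : ℝ) (hs : 0 < s) (hr : 0 < r)
    (hrs : 2 * r ≤ s) (x : Euc d) :
    boxMeasure d s {v | ¬ ball x r ⊆ cubeBlock d s v x} ≤
      ENNReal.ofReal (d * (2 * r / s)) := by
  set box : Set (Fin d → ℝ) := Set.pi Set.univ fun _ : Fin d => Set.Icc (0 : ℝ) s with hbox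
  have hboxm : MeasurableSet box := MeasurableSet.univ_pi fun _ => measurableSet_Icc
  set B : Fin d → Set (Fin d → ℝ) :=
    fun i => {v : Fin d → ℝ | ∃ k : ℤ, |x i - v i - s * k| < r} with hB
  have hsub : {v | ¬ ball x r ⊆ cubeBlock d s v x} ⊆ ⋃ i, B i := by
    intro v hv
    simp only [Set.mem_setOf_eq, Set.not_subset] at hv
    obtain ⟨y, hyb, hyn⟩ := hv
    have hex : ∃ i, ⌊(y i - v i) / s⌋ ≠ ⌊(x i - v i) / s⌋ := by
      by_contra hco
      push_neg at hco
      exact hyn hco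
    obtain ⟨i, hi⟩ := hex
    refine Set.mem_iUnion.mpr ⟨i, ?_⟩
    refine exists_lattice s r (x i - v i) (y i - v i) hs hi ?_
    have h1 := coord_dist_le d y x i
    rw [Real.dist_eq] at h1
    have h2 := mem_ball.mp hyb
    rw [dist_comm] at h2  -- dist y x
    have h3 : y i - v i - (x i - v i) = y i - x i := by ring
    rw [h3]
    calc |y i - x i| ≤ dist y x := h1
      _ < r := mem_ball.mp hyb
  have hBi : ∀ i, boxMeasure d s (B i) ≤ ENNReal.ofReal (2 * r / s) := by
    intro i
    classical
    set t : Fin d → Set ℝ := fun j =>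
      if j = i then {w : ℝ | w ∈ Icc 0 s ∧ ∃ k : ℤ, |x i - w - s * k| < r}
      else Icc 0 s with ht
    have hsub2 : B i ∩ box ⊆ Set.pi Set.univ t := by
      rintro v ⟨hvB, hvbox⟩ j _
      by_cases hji : j = i
      · subst hji
        simp only [ht, if_pos rfl]
        exact ⟨hvbox j (Set.mem_univ j), hvB⟩
      · simp only [ht, if_neg hji]
        exact hvbox j (Set.mem_univ j)
    have hvolbox : volume box = ENNReal.ofReal s ^ d := by
      rw [hbox, volume_pi_pi]
      simp [Real.volume_Icc]
    have hprod : volume (Set.pi Set.univ t) ≤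
        ENNReal.ofReal (2 * r) * ENNReal.ofReal s ^ (d - 1) := by
      rw [volume_pi_pi]
      rw [← Finset.mul_prod_erase Finset.univ (fun j => volume (t j)) (Finset.mem_univ i)]
      have h1 : volume (t i) ≤ ENNReal.ofReal (2 * r) := by
        rw [ht]
        simp only [if_pos rfl]
        exact oneDim s r (x i) hs hr hrs
      have h2 : ∏ j ∈ Finset.univ.erase i, volume (t j) = ENNReal.ofReal s ^ (d - 1) := by
        calc ∏ j ∈ Finset.univ.erase i, volume (t j)
            = ∏ _j ∈ Finset.univ.erase i, ENNReal.ofReal s := by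
              refine Finset.prod_congr rfl fun j hj => ?_
              rw [ht]
              simp only [if_neg (Finset.ne_of_mem_erase hj)]
              rw [Real.volume_Icc, sub_zero]
          _ = ENNReal.ofReal s ^ (d - 1) := by
              rw [Finset.prod_const, Finset.card_erase_of_mem (Finset.mem_univ i),
                Finset.card_univ, Fintype.card_fin]
      rw [h2]
      exact mul_le_mul_left h1 _
    have key : boxMeasure d s (B i) ≤
        (ENNReal.ofReal s ^ d)⁻¹ * (ENNReal.ofReal (2 * r) * ENNReal.ofReal s ^ (d - 1)) := by
      show ((volume box)⁻¹ • volume.restrict box) (B i) ≤ _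
      rw [Measure.smul_apply, smul_eq_mul, Measure.restrict_apply' hboxm, hvolbox]
      exact mul_le_mul_right (le_trans (measure_mono hsub2) hprod) _
    refine le_trans key (le_of_eq ?_)
    rw [← ENNReal.ofReal_pow hs.le, ← ENNReal.ofReal_pow hs.le,
      ← ENNReal.ofReal_mul (by positivity), ← ENNReal.div_eq_inv_mul,
      ← ENNReal.ofReal_div_of_pos (pow_pos hs d)]
    congr 1
    have hsd : s ^ d = s ^ (d - 1) * s := by
      conv_lhs => rw [← Nat.sub_add_cancel hd]
      rw [pow_succ]
    rw [hsd, div_eq_div_iff (by positivity) hs.ne']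
    ring
  calc boxMeasure d s {v | ¬ ball x r ⊆ cubeBlock d s v x}
      ≤ boxMeasure d s (⋃ i, B i) := measure_mono hsub
    _ ≤ ∑' i, boxMeasure d s (B i) := measure_iUnion_le _
    _ = ∑ i, boxMeasure d s (B i) := tsum_fintype _
    _ ≤ ∑ _i : Fin d, ENNReal.ofReal (2 * r / s) :=
        Finset.sum_le_sum fun i _ => hBi i
    _ = ENNReal.ofReal (d * (2 * r / s)) := by
        rw [Finset.sum_const, Finset.card_univ, Fintype.card_fin, nsmul_eq_mul,
          ← ENNReal.ofReal_natCast d, ← ENNReal.ofReal_mul (Nat.cast_nonneg d)]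

/-- Lemma 3: for `d ≥ 1`, `ε > 0` and every `β > 2√d`, the random cube partition
of `ℝ^d` with parameter `ε` (cubes of side `ε/√d`, uniformly random shift
`v ∈ [0, ε/√d]^d`) is `(ε, β, 2d^{3/2}/β)`-padded: every block has `ℓ₂`-diameter
`ε`, and for every `x ∈ ℝ^d`,
`ℙ_v[ B_{ε/β}(x) ⊄ π_v(x) ] ≤ 2 d^{3/2} / β`. -/
theorem stmt7 (d : ℕ) (hd : 1 ≤ d) (ε β : ℝ) (hε : 0 < ε)
    (hβ : 2 * Real.sqrt d < β) :
    (∀ (v : Fin d → ℝ) (x : Euc d),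
      EMetric.diam (cubeBlock d (ε / Real.sqrt d) v x) = ENNReal.ofReal ε) ∧
    (∀ x : Euc d,
      boxMeasure d (ε / Real.sqrt d)
        {v | ¬ ball x (ε / β) ⊆ cubeBlock d (ε / Real.sqrt d) v x} ≤
      ENNReal.ofReal (2 * (d : ℝ) ^ ((3 : ℝ) / 2) / β)) := by
  have hdpos : (0 : ℝ) < d := by exact_mod_cast hd
  have hsd : 0 < Real.sqrt d := Real.sqrt_pos.mpr hdpos
  have hβ0 : 0 < β := lt_trans (by positivity) hβ
  have hs : 0 < ε / Real.sqrt d := div_pos hε hsd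
  have hr : 0 < ε / β := div_pos hε hβ0
  have hrs : 2 * (ε / β) ≤ ε / Real.sqrt d := by
    rw [mul_div_assoc', div_le_div_iff₀ hβ0 hsd]
    nlinarith [Real.sq_sqrt hdpos.le]
  constructor
  · intro v x
    rw [diam_cubeBlock d (ε / Real.sqrt d) hs v x]
    congr 1
    field_simp
  · intro x
    refine le_trans (boxMeasure_bad_le d hd (ε / Real.sqrt d) (ε / β) hs hr hrs x)
      (le_of_eq ?_)
    congr 1
    have h32 : (d : ℝ) ^ ((3 : ℝ) / 2) = d * Real.sqrt d := by
      rw [show (3 : ℝ) / 2 = 1 + 1 / 2 by norm_num, Real.rpow_add hdpos, Real.rpow_one,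
        ← Real.sqrt_eq_rpow]
    rw [h32]
    field_simp
end
end

section
/- (Theorem 1, cube partitions.) Let (𝒟,h) be a separable binary classification task on ℝ^d (d ≥ 1), let f be a measurable classifier, let ε > 0 and β > 2√d, and let g_v be the smoothed classifier obtained from the cube partition of ℝ^d with parameter εβ and uniformly random shift v ∈ [0, εβ/√d]^d. Then 𝔼_v[AR(g_v, ε)] ≤ 2·S(εβ) + 2·R(f) + 2d^{3/2}/β; moreover, if AR(ε) > 0 then 𝔼_v[AR(g_v, ε)] ≤ (2·S(εβ)/S(2ε))·AR(ε) + 2·R(f) + 2d^{3/2}/β. (Setting α := 2d^{3/2}/β this is the paper's bound AR(g,ε) ≤ 2S(2d^{3/2}ε/α) + 2R(f) + α.) -/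
open MeasureTheory Metric Set
open scoped ENNReal NNReal

noncomputable section

/-- The support of a Borel measure on `ℝ^d`: the set of points all of whose
neighborhoods have positive mass. -/
def msupport {d : ℕ} (𝒟 : Measure (Euc d)) : Set (Euc d) :=
  {x | ∀ r : ℝ, 0 < r → 0 < 𝒟 (ball x r)}

/-- `sgn t = 1` if `t ≥ 0` and `sgn t = -1` otherwise. -/
def sgn (t : ℝ) : ℝ := if 0 ≤ t then 1 else -1

/-- `sgn (𝔼_{Z ∼ 𝒟}[f(Z) ∣ Z ∈ A])`: the sign of the conditional expectation of
`f` under `𝒟` given the block `A`. -/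
def smoothVal {d : ℕ} (𝒟 : Measure (Euc d)) (f : Euc d → ℝ) (A : Set (Euc d)) : ℝ :=
  sgn ((∫ z in A, f z ∂𝒟) / (𝒟 A).toReal)

namespace Stmt13

lemma sgn_mem (t : ℝ) : sgn t = 1 ∨ sgn t = -1 := by
  unfold sgn; split <;> simp

/-- The block of the shifted cube partition with index vector `k`. -/
def Block (d : ℕ) (s : ℝ) (v : Fin d → ℝ) (k : Fin d → ℤ) : Set (Euc d) :=
  {y | ∀ i, ⌊(y i - v i) / s⌋ = k i}

lemma floor_div_eq_iff {s a : ℝ} (hs : 0 < s) (m : ℤ) :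
    ⌊a / s⌋ = m ↔ (m : ℝ) * s ≤ a ∧ a < ((m : ℝ) + 1) * s := by
  rw [Int.floor_eq_iff, le_div_iff₀ hs, div_lt_iff₀ hs]

variable {d : ℕ}

lemma meas_eval (d : ℕ) (i : Fin d) : Measurable fun y : Euc d => y i :=
  (measurable_pi_apply i).comp (MeasurableEquiv.toLp 2 (Fin d → ℝ)).symm.measurable

lemma measurableSet_Block (s : ℝ) (v : Fin d → ℝ) (k : Fin d → ℤ) :
    MeasurableSet (Block d s v k) := by
  have : Block d s v k = ⋂ i, (fun y : Euc d => ⌊(y i - v i) / s⌋) ⁻¹' {k i} := by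
    ext y; simp [Block]
  rw [this]
  refine MeasurableSet.iInter fun i => ?_
  have hm : Measurable fun y : Euc d => ⌊(y i - v i) / s⌋ :=
    (((meas_eval d i).sub measurable_const).div_const s).floor
  exact hm (measurableSet_singleton _)

lemma mem_Block_self (s : ℝ) (v : Fin d → ℝ) (x : Euc d) :
    x ∈ Block d s v (fun i => ⌊(x i - v i) / s⌋) := fun _ => rfl

lemma Block_disjoint (s : ℝ) (v : Fin d → ℝ) :
    Pairwise (Function.onFun Disjoint fun k : Fin d → ℤ => Block d s v k) := by
  intro k k' hkk'
  rw [Function.onFun, Set.disjoint_left]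
  intro y hy hy'
  exact hkk' (funext fun i => (hy i).symm.trans (hy' i))

lemma Block_cover (s : ℝ) (v : Fin d → ℝ) :
    (⋃ k : Fin d → ℤ, Block d s v k) = Set.univ :=
  Set.eq_univ_iff_forall.mpr fun x =>
    Set.mem_iUnion.mpr ⟨fun i => ⌊(x i - v i) / s⌋, mem_Block_self s v x⟩

lemma cubeBlock_eq {s : ℝ} {v : Fin d → ℝ} {k : Fin d → ℤ} {x : Euc d}
    (hx : x ∈ Block d s v k) : cubeBlock d s v x = Block d s v k := by
  ext y
  exact forall_congr' fun i => by rw [hx i]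

lemma dist_lt_of_mem_Block (hd : 1 ≤ d) {s : ℝ} (hs : 0 < s) {v : Fin d → ℝ}
    {k : Fin d → ℤ} {y z : Euc d} (hy : y ∈ Block d s v k) (hz : z ∈ Block d s v k) :
    dist y z < s * Real.sqrt d := by
  have hne : (Finset.univ : Finset (Fin d)).Nonempty := by
    have : Nonempty (Fin d) := ⟨⟨0, hd⟩⟩
    exact Finset.univ_nonempty
  have hterm : ∀ i : Fin d, dist (y i) (z i) ^ 2 < s ^ 2 := by
    intro i
    have h1 := (floor_div_eq_iff hs (k i)).mp (hy i)
    have h2 := (floor_div_eq_iff hs (k i)).mp (hz i)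
    have hlt : dist (y i) (z i) < s := by
      rw [Real.dist_eq, abs_lt]; constructor <;> nlinarith [h1.1, h1.2, h2.1, h2.2]
    exact pow_lt_pow_left₀ hlt dist_nonneg two_ne_zero
  have hsum : ∑ i, dist (y i) (z i) ^ 2 < (d : ℝ) * s ^ 2 := by
    calc ∑ i, dist (y i) (z i) ^ 2 < ∑ _i : Fin d, s ^ 2 :=
          Finset.sum_lt_sum_of_nonempty hne fun i _ => hterm i
      _ = (d : ℝ) * s ^ 2 := by simp [Finset.sum_const, Finset.card_univ, mul_comm]
  calc dist y z = Real.sqrt (∑ i, dist (y i) (z i) ^ 2) := EuclideanSpace.dist_eq y z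
    _ < Real.sqrt ((d : ℝ) * s ^ 2) := by
        exact Real.sqrt_lt_sqrt (Finset.sum_nonneg fun i _ => sq_nonneg _) hsum
    _ = s * Real.sqrt d := by
        rw [Real.sqrt_mul (by positivity), Real.sqrt_sq hs.le]; ring

lemma abs_coord_le_norm (η : Euc d) (i : Fin d) : |η i| ≤ ‖η‖ := by
  rw [EuclideanSpace.norm_eq]
  calc |η i| = Real.sqrt (‖η i‖ ^ 2) := by
        rw [Real.sqrt_sq_eq_abs, Real.norm_eq_abs, abs_abs]
    _ ≤ _ := Real.sqrt_le_sqrt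
        (Finset.single_le_sum (fun j _ => sq_nonneg ‖η j‖) (Finset.mem_univ i))

lemma floor_stable {s c ε t : ℝ} (hs : 0 < s)
    (hband : ∀ m : ℤ, ε ≤ |c - (m : ℝ) * s|) (ht : |t| < ε) :
    ⌊(c + t) / s⌋ = ⌊c / s⌋ := by
  set k := ⌊c / s⌋ with hk
  have h1 : (k : ℝ) * s ≤ c ∧ c < ((k : ℝ) + 1) * s := (floor_div_eq_iff hs k).mp rfl
  have e1 : ε ≤ c - (k : ℝ) * s := by
    have := hband k
    rwa [abs_of_nonneg (by linarith [h1.1])] at this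
  have e2 : ε ≤ ((k : ℝ) + 1) * s - c := by
    have := hband (k + 1)
    rw [abs_sub_comm] at this
    push_cast at this
    rwa [abs_of_nonneg (by linarith [h1.2])] at this
  have ht' := abs_lt.mp ht
  exact (floor_div_eq_iff hs k).mpr ⟨by linarith, by linarith⟩

/-- Core per-block bound. -/
lemma block_bound (𝒟 : Measure (Euc d)) [IsProbabilityMeasure 𝒟]
    {h f : Euc d → ℝ} (hh : IsClassifier h) (hf : IsClassifier f)
    {E A : Set (Euc d)} (hE : MeasurableSet E) (hA : MeasurableSet A)
    (hApos : 𝒟 A ≠ 0)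
    (hconst : ∀ y ∈ A \ E, ∀ z ∈ A \ E, h y = h z)
    {G : Euc d → ℝ} (hG : ∀ x ∈ A, G x = smoothVal 𝒟 f A) :
    𝒟 ({x | G x ≠ h x} ∩ A) ≤ 2 * 𝒟 (E ∩ A) + 2 * 𝒟 ({x | f x ≠ h x} ∩ A) := by
  have hAfin : 𝒟 A ≠ ∞ := measure_ne_top 𝒟 A
  have hσmem : smoothVal 𝒟 f A = 1 ∨ smoothVal 𝒟 f A = -1 := sgn_mem _
  set σ := smoothVal 𝒟 f A with hσdef
  have easy : 𝒟 ({x | G x ≠ h x} ∩ A) ≤ 𝒟 (E ∩ A) →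
      𝒟 ({x | G x ≠ h x} ∩ A) ≤ 2 * 𝒟 (E ∩ A) + 2 * 𝒟 ({x | f x ≠ h x} ∩ A) := by
    intro hle
    calc 𝒟 ({x | G x ≠ h x} ∩ A) ≤ 𝒟 (E ∩ A) := hle
      _ ≤ 2 * 𝒟 (E ∩ A) + 2 * 𝒟 ({x | f x ≠ h x} ∩ A) := by
          nth_rewrite 1 [← one_mul (𝒟 (E ∩ A))]
          exact le_add_right (mul_le_mul_left (by norm_num) _)
  by_cases hAE : (A \ E) = ∅
  · refine easy (measure_mono ?_)
    rintro x ⟨-, hx2⟩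
    by_cases he : x ∈ E
    · exact ⟨he, hx2⟩
    · exact absurd (Set.mem_diff_of_mem hx2 he) (by simp [hAE])
  · obtain ⟨z₀, hz₀⟩ := Set.nonempty_iff_ne_empty.mpr hAE
    set τ := h z₀ with hτdef
    have hτmem : τ = 1 ∨ τ = -1 := hh.2 z₀
    have hlabel : ∀ y ∈ A \ E, h y = τ := fun y hy => hconst y hy z₀ hz₀
    by_cases hστ : σ = τ
    · refine easy (measure_mono ?_)
      rintro x ⟨hx1, hx2⟩
      by_cases he : x ∈ E
      · exact ⟨he, hx2⟩
      · exact absurd ((hG x hx2).trans (hστ.trans (hlabel x ⟨hx2, he⟩).symm)) hx1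
    · -- bad block
      set P := A ∩ {x | f x = σ} with hPdef
      set Q := A ∩ {x | f x = τ} with hQdef
      have hPm : MeasurableSet P := hA.inter (hf.1 (measurableSet_singleton σ))
      have hQm : MeasurableSet Q := hA.inter (hf.1 (measurableSet_singleton τ))
      have hdisj : Disjoint P Q := by
        rw [Set.disjoint_left]
        rintro x ⟨-, hx2⟩ ⟨-, hx4⟩
        exact hστ ((hx2 : f x = σ).symm.trans hx4)
      have hunion : P ∪ Q = A := by
        ext x
        constructor
        · rintro (⟨hx, -⟩ | ⟨hx, -⟩) <;> exact hx
        · intro hx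
          rcases hσmem with h1 | h1 <;> rcases hτmem with h2 | h2
          · exact absurd (h1.trans h2.symm) hστ
          · rcases hf.2 x with hfx | hfx
            · exact Or.inl ⟨hx, by rw [Set.mem_setOf_eq, hfx, h1]⟩
            · exact Or.inr ⟨hx, by rw [Set.mem_setOf_eq, hfx, h2]⟩
          · rcases hf.2 x with hfx | hfx
            · exact Or.inr ⟨hx, by rw [Set.mem_setOf_eq, hfx, h2]⟩
            · exact Or.inl ⟨hx, by rw [Set.mem_setOf_eq, hfx, h1]⟩
          · exact absurd (h1.trans h2.symm) hστ
      have hint : Integrable f 𝒟 := by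
        refine (integrable_const (1 : ℝ)).mono' hf.1.aestronglyMeasurable ?_
        filter_upwards with x
        rcases hf.2 x with hfx | hfx <;> simp [hfx]
      have hintA : ∫ z in A, f z ∂𝒟 = σ * (𝒟 P).toReal + τ * (𝒟 Q).toReal := by
        rw [← hunion, setIntegral_union hdisj hQm hint.integrableOn hint.integrableOn]
        have e1 : ∫ z in P, f z ∂𝒟 = σ * (𝒟 P).toReal := by
          rw [setIntegral_congr_fun hPm (fun x hx => (hx.2 : f x = σ)),
            setIntegral_const, smul_eq_mul, mul_comm]; rfl
        have e2 : ∫ z in Q, f z ∂𝒟 = τ * (𝒟 Q).toReal := by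
          rw [setIntegral_congr_fun hQm (fun x hx => (hx.2 : f x = τ)),
            setIntegral_const, smul_eq_mul, mul_comm]; rfl
        rw [e1, e2]
      have hr : 0 < (𝒟 A).toReal := ENNReal.toReal_pos hApos hAfin
      have key : (𝒟 Q).toReal ≤ (𝒟 P).toReal := by
        by_contra hqp
        push_neg at hqp
        have hval : sgn ((σ * (𝒟 P).toReal + τ * (𝒟 Q).toReal) / (𝒟 A).toReal) = σ := by
          rw [← hintA]; exact hσdef.symm
        rcases hσmem with h1 | h1
        · have h2 : τ = -1 := by
            rcases hτmem with h2 | h2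
            · exact absurd (h1.trans h2.symm) hστ
            · exact h2
          rw [h1, h2] at hval
          have hneg : (1 * (𝒟 P).toReal + -1 * (𝒟 Q).toReal) / (𝒟 A).toReal < 0 := by
            apply div_neg_of_neg_of_pos _ hr; linarith
          rw [sgn, if_neg (not_le.mpr hneg)] at hval
          exact absurd hval (by norm_num)
        · have h2 : τ = 1 := by
            rcases hτmem with h2 | h2
            · exact h2
            · exact absurd (h1.trans h2.symm) hστ
          rw [h1, h2] at hval
          have hpos : (0:ℝ) ≤ (-1 * (𝒟 P).toReal + 1 * (𝒟 Q).toReal) / (𝒟 A).toReal := by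
            apply div_nonneg _ hr.le; linarith
          rw [sgn, if_pos hpos] at hval
          exact absurd hval (by norm_num)
      have hQP : 𝒟 Q ≤ 𝒟 P :=
        (ENNReal.toReal_le_toReal (measure_ne_top 𝒟 Q) (measure_ne_top 𝒟 P)).mp key
      have hPsub : P ⊆ (E ∩ A) ∪ ({x | f x ≠ h x} ∩ A) := by
        rintro x ⟨hxA, hxf⟩
        by_cases he : x ∈ E
        · exact Or.inl ⟨he, hxA⟩
        · refine Or.inr ⟨?_, hxA⟩
          rw [Set.mem_setOf_eq, (hxf : f x = σ), hlabel x ⟨hxA, he⟩]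
          exact hστ
      have hPle : 𝒟 P ≤ 𝒟 (E ∩ A) + 𝒟 ({x | f x ≠ h x} ∩ A) :=
        (measure_mono hPsub).trans (measure_union_le _ _)
      calc 𝒟 ({x | G x ≠ h x} ∩ A) ≤ 𝒟 A := measure_mono Set.inter_subset_right
        _ = 𝒟 P + 𝒟 Q := by rw [← hunion, measure_union hdisj hQm]
        _ ≤ 2 * 𝒟 P := by rw [two_mul]; exact add_le_add_right hQP _
        _ ≤ 2 * (𝒟 (E ∩ A) + 𝒟 ({x | f x ≠ h x} ∩ A)) := mul_le_mul_right hPle 2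
        _ = 2 * 𝒟 (E ∩ A) + 2 * 𝒟 ({x | f x ≠ h x} ∩ A) := mul_add 2 _ _

/-- Per-shift bound on the adversarial risk of the smoothed classifier. -/
lemma perv_bound (𝒟 : Measure (Euc d)) [IsProbabilityMeasure 𝒟] (hd : 1 ≤ d)
    {h f : Euc d → ℝ} (hh : IsClassifier h) (hf : IsClassifier f)
    {s ε : ℝ} (hε : 0 < ε) (hs : 0 < s)
    {E : Set (Euc d)} (hE : MeasurableSet E)
    (hsep : ENNReal.ofReal (s * Real.sqrt d) ≤
      setEDist (h ⁻¹' {-1} \ E) (h ⁻¹' {1} \ E))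
    {G : Euc d → ℝ} (v : Fin d → ℝ)
    (hG : ∀ x : Euc d, 𝒟 (cubeBlock d s v x) ≠ 0 → G x = smoothVal 𝒟 f (cubeBlock d s v x)) :
    advRisk 𝒟 h G ε ≤
      𝒟 {x : Euc d | ∃ i, ∃ m : ℤ, |x i - v i - (m : ℝ) * s| < ε}
        + (2 * 𝒟 E + 2 * risk 𝒟 h f) := by
  classical
  have hd0 : (0:ℝ) < (d:ℝ) := by exact_mod_cast hd
  set Bv := {x : Euc d | ∃ i, ∃ m : ℤ, |x i - v i - (m:ℝ)*s| < ε} with hBv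
  set Nv := ⋃ k ∈ {k : Fin d → ℤ | 𝒟 (Block d s v k) = 0}, Block d s v k with hNv
  have hNv0 : 𝒟 Nv = 0 :=
    (measure_biUnion_null_iff (Set.to_countable _)).mpr fun k hk => hk
  have hincl : {x : Euc d | ∃ η : Euc d, ‖η‖ < ε ∧ G (x + η) ≠ h x} ⊆
      Bv ∪ (Nv ∪ {x | G x ≠ h x}) := by
    intro x hx
    by_cases hxB : x ∈ Bv
    · exact Or.inl hxB
    right
    by_cases hxN : x ∈ Nv
    · exact Or.inl hxN
    right
    obtain ⟨η, hη, hne⟩ := hx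
    set k : Fin d → ℤ := fun i => ⌊(x i - v i) / s⌋ with hk
    have hxblk : x ∈ Block d s v k := mem_Block_self s v x
    have hpos : 𝒟 (Block d s v k) ≠ 0 := fun h0 => hxN (Set.mem_biUnion h0 hxblk)
    have hband : ∀ i, ∀ m : ℤ, ε ≤ |x i - v i - (m:ℝ)*s| := by
      intro i m; by_contra hc; push_neg at hc; exact hxB ⟨i, m, hc⟩
    have hηblk : x + η ∈ Block d s v k := by
      intro i
      have happ : (x + η) i = (x i - v i + η i) + v i := by
        have : (x + η) i = x i + η i := rfl
        rw [this]; ring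
      rw [happ]
      have : x i - v i + η i + v i - v i = (x i - v i) + η i := by ring
      rw [this]
      exact floor_stable hs (fun m => hband i m)
        ((abs_coord_le_norm η i).trans_lt hη)
    have hcubeq : cubeBlock d s v (x + η) = Block d s v k := cubeBlock_eq hηblk
    have hcubeqx : cubeBlock d s v x = Block d s v k := cubeBlock_eq hxblk
    have e1 : G (x + η) = smoothVal 𝒟 f (Block d s v k) := by
      rw [hG (x + η) (by rw [hcubeq]; exact hpos), hcubeq]
    have e2 : G x = smoothVal 𝒟 f (Block d s v k) := by
      rw [hG x (by rw [hcubeqx]; exact hpos), hcubeqx]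
    rw [Set.mem_setOf_eq, e2, ← e1]
    exact hne
  have hfh : MeasurableSet {x : Euc d | f x ≠ h x} := by
    have : MeasurableSet {x : Euc d | f x = h x} := measurableSet_eq_fun hf.1 hh.1
    have he : {x : Euc d | f x ≠ h x} = {x : Euc d | f x = h x}ᶜ := rfl
    rw [he]; exact this.compl
  have hGh : 𝒟 {x | G x ≠ h x} ≤ 2 * 𝒟 E + 2 * risk 𝒟 h f := by
    set T : (Fin d → ℤ) → Set (Euc d) := fun k =>
      if 𝒟 (Block d s v k) = 0 then ∅ else {x | G x ≠ h x} ∩ Block d s v k with hT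
    have hsub2 : {x | G x ≠ h x} ⊆ Nv ∪ ⋃ k : Fin d → ℤ, T k := by
      intro x hx
      set k : Fin d → ℤ := fun i => ⌊(x i - v i) / s⌋
      by_cases h0 : 𝒟 (Block d s v k) = 0
      · exact Or.inl (Set.mem_biUnion h0 (mem_Block_self s v x))
      · refine Or.inr (Set.mem_iUnion.mpr ⟨k, ?_⟩)
        rw [hT]; simp only [if_neg h0]
        exact ⟨hx, mem_Block_self s v x⟩
    have key : ∀ k : Fin d → ℤ, 𝒟 (T k) ≤
        2 * 𝒟 (E ∩ Block d s v k) + 2 * 𝒟 ({x | f x ≠ h x} ∩ Block d s v k) := by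
      intro k
      by_cases h0 : 𝒟 (Block d s v k) = 0
      · rw [hT]; simp only [if_pos h0, measure_empty]; exact zero_le ..
      · rw [hT]; simp only [if_neg h0]
        refine block_bound 𝒟 hh hf hE (measurableSet_Block s v k) h0 ?_ ?_
        · intro y hy z hz
          rcases hh.2 y with hy1 | hy1 <;> rcases hh.2 z with hz1 | hz1
          · rw [hy1, hz1]
          · exfalso
            have hd1 : edist z y < ENNReal.ofReal (s * Real.sqrt d) := by
              rw [edist_dist]
              exact (ENNReal.ofReal_lt_ofReal_iff
                (mul_pos hs (Real.sqrt_pos.mpr hd0))).mpr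
                (dist_lt_of_mem_Block hd hs hz.1 hy.1)
            have hd2 : ENNReal.ofReal (s * Real.sqrt d) ≤ edist z y := by
              refine hsep.trans ?_
              refine iInf₂_le_of_le z ⟨by simp [hz1], hz.2⟩ ?_
              exact iInf₂_le y ⟨by simp [hy1], hy.2⟩
            exact absurd hd1 (not_lt.mpr hd2)
          · exfalso
            have hd1 : edist y z < ENNReal.ofReal (s * Real.sqrt d) := by
              rw [edist_dist]
              exact (ENNReal.ofReal_lt_ofReal_iff
                (mul_pos hs (Real.sqrt_pos.mpr hd0))).mpr
                (dist_lt_of_mem_Block hd hs hy.1 hz.1)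
            have hd2 : ENNReal.ofReal (s * Real.sqrt d) ≤ edist y z := by
              refine hsep.trans ?_
              refine iInf₂_le_of_le y ⟨by simp [hy1], hy.2⟩ ?_
              exact iInf₂_le z ⟨by simp [hz1], hz.2⟩
            exact absurd hd1 (not_lt.mpr hd2)
          · rw [hy1, hz1]
        · intro x hx
          rw [hG x (by rw [cubeBlock_eq hx]; exact h0), cubeBlock_eq hx]
    have hsumE : ∑' k : Fin d → ℤ, 𝒟 (E ∩ Block d s v k) = 𝒟 E := by
      rw [← measure_iUnion
        (fun k k' hkk' => ((Block_disjoint s v hkk').mono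
          Set.inter_subset_right Set.inter_subset_right))
        (fun k => hE.inter (measurableSet_Block s v k))]
      rw [← Set.inter_iUnion, Block_cover, Set.inter_univ]
    have hsumR : ∑' k : Fin d → ℤ, 𝒟 ({x | f x ≠ h x} ∩ Block d s v k)
        = risk 𝒟 h f := by
      rw [← measure_iUnion
        (fun k k' hkk' => ((Block_disjoint s v hkk').mono
          Set.inter_subset_right Set.inter_subset_right))
        (fun k => hfh.inter (measurableSet_Block s v k))]
      rw [← Set.inter_iUnion, Block_cover, Set.inter_univ]
      rfl
    calc 𝒟 {x | G x ≠ h x} ≤ 𝒟 Nv + 𝒟 (⋃ k : Fin d → ℤ, T k) :=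
          (measure_mono hsub2).trans (measure_union_le _ _)
      _ = 𝒟 (⋃ k : Fin d → ℤ, T k) := by rw [hNv0, zero_add]
      _ ≤ ∑' k : Fin d → ℤ, 𝒟 (T k) := measure_iUnion_le _
      _ ≤ ∑' k : Fin d → ℤ, (2 * 𝒟 (E ∩ Block d s v k)
            + 2 * 𝒟 ({x | f x ≠ h x} ∩ Block d s v k)) :=
          ENNReal.tsum_le_tsum key
      _ = 2 * 𝒟 E + 2 * risk 𝒟 h f := by
          rw [ENNReal.tsum_add, ENNReal.tsum_mul_left, ENNReal.tsum_mul_left,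
            hsumE, hsumR]
  calc advRisk 𝒟 h G ε ≤ 𝒟 Bv + (𝒟 Nv + 𝒟 {x | G x ≠ h x}) :=
        (measure_mono hincl).trans ((measure_union_le _ _).trans
          (add_le_add_right (measure_union_le _ _) _))
    _ = 𝒟 Bv + 𝒟 {x | G x ≠ h x} := by rw [hNv0, zero_add]
    _ ≤ 𝒟 Bv + (2 * 𝒟 E + 2 * risk 𝒟 h f) := add_le_add_right hGh _

lemma oneD {s ε : ℝ} (c : ℝ) (hε : 0 < ε) (hs : 2 * ε < s) :
    volume (Set.Icc (0:ℝ) s ∩ ⋃ m : ℤ, Set.Ioo (c - (m:ℝ)*s - ε) (c - (m:ℝ)*s + ε)) ≤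
      ENNReal.ofReal (2 * ε) := by
  have hs0 : 0 < s := by linarith
  set q : ℤ := ⌊(c + ε) / s⌋ with hq
  have hq1 : (q : ℝ) ≤ (c + ε) / s := Int.floor_le _
  have hq1' : (q : ℝ) * s ≤ c + ε := by
    rw [← le_div_iff₀ hs0]; exact hq1
  set a : ℝ := c - (q : ℝ) * s with ha
  have hincl : Set.Icc (0:ℝ) s ∩ ⋃ m : ℤ, Set.Ioo (c - (m:ℝ)*s - ε) (c - (m:ℝ)*s + ε) ⊆
      (Set.Icc (0:ℝ) s ∩ Set.Ioo (a - ε) (a + ε)) ∪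
        (Set.Icc (0:ℝ) s ∩ Set.Ioo (a + s - ε) (a + s + ε)) := by
    rintro t ⟨ht, hmem⟩
    obtain ⟨m, hm⟩ := Set.mem_iUnion.mp hmem
    obtain ⟨hm1, hm2⟩ := hm
    obtain ⟨ht1, ht2⟩ := ht
    have hmq : (m : ℝ) < (c + ε) / s := by
      rw [lt_div_iff₀ hs0]; nlinarith
    have hmle : m ≤ q := Int.le_floor.mpr hmq.le
    have hmge : q - 1 ≤ m := by
      have h2 : (m : ℝ) * s > c - ε - s := by nlinarith
      have h3 : ((q : ℝ) - 2) * s < (m : ℝ) * s := by nlinarith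
      have h4 : (q : ℝ) - 2 < (m : ℝ) := by
        exact lt_of_mul_lt_mul_right (by linarith [h3]) hs0.le
      have : (q : ℤ) - 2 < m := by exact_mod_cast h4
      omega
    have hcase : m = q ∨ m = q - 1 := by omega
    rcases hcase with rfl | rfl
    · exact Or.inl ⟨⟨ht1, ht2⟩, by constructor <;> [linarith; linarith]⟩
    · refine Or.inr ⟨⟨ht1, ht2⟩, ?_⟩
      have hcast : ((q - 1 : ℤ) : ℝ) = (q : ℝ) - 1 := by push_cast; ring
      rw [hcast] at hm1 hm2
      constructor <;> [nlinarith; nlinarith]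
  refine (measure_mono hincl).trans ?_
  refine (measure_union_le _ _).trans ?_
  have htrans : volume (Set.Icc (0:ℝ) s ∩ Set.Ioo (a + s - ε) (a + s + ε)) =
      volume (Set.Icc (-s) 0 ∩ Set.Ioo (a - ε) (a + ε)) := by
    have hpre : Set.Icc (-s) 0 ∩ Set.Ioo (a - ε) (a + ε) =
        (fun t : ℝ => t + s) ⁻¹' (Set.Icc (0:ℝ) s ∩ Set.Ioo (a + s - ε) (a + s + ε)) := by
      ext t
      simp only [Set.mem_inter_iff, Set.mem_Icc, Set.mem_Ioo, Set.mem_preimage]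
      constructor
      · rintro ⟨⟨h1, h2⟩, h3, h4⟩; exact ⟨⟨by linarith, by linarith⟩, by linarith, by linarith⟩
      · rintro ⟨⟨h1, h2⟩, h3, h4⟩; exact ⟨⟨by linarith, by linarith⟩, by linarith, by linarith⟩
    rw [hpre, measure_preimage_add_right]
  rw [htrans]
  have hXm : MeasurableSet (Set.Icc (0:ℝ) s ∩ Set.Ioo (a - ε) (a + ε)) :=
    measurableSet_Icc.inter measurableSet_Ioo
  have hYm : MeasurableSet (Set.Icc (-s) (0:ℝ) ∩ Set.Ioo (a - ε) (a + ε)) :=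
    measurableSet_Icc.inter measurableSet_Ioo
  rw [← measure_union_add_inter (Set.Icc (0:ℝ) s ∩ Set.Ioo (a - ε) (a + ε)) hYm]
  have hsub1 : (Set.Icc (0:ℝ) s ∩ Set.Ioo (a - ε) (a + ε)) ∪
      (Set.Icc (-s) 0 ∩ Set.Ioo (a - ε) (a + ε)) ⊆ Set.Ioo (a - ε) (a + ε) := by
    rintro t (⟨-, h2⟩ | ⟨-, h2⟩) <;> exact h2
  have hsub2 : (Set.Icc (0:ℝ) s ∩ Set.Ioo (a - ε) (a + ε)) ∩
      (Set.Icc (-s) 0 ∩ Set.Ioo (a - ε) (a + ε)) ⊆ {(0:ℝ)} := by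
    rintro t ⟨⟨⟨h1, -⟩, -⟩, ⟨⟨-, h2⟩, -⟩⟩
    exact Set.mem_singleton_iff.mpr (le_antisymm h2 h1)
  calc volume ((Set.Icc (0:ℝ) s ∩ Set.Ioo (a - ε) (a + ε)) ∪
        (Set.Icc (-s) 0 ∩ Set.Ioo (a - ε) (a + ε))) +
      volume ((Set.Icc (0:ℝ) s ∩ Set.Ioo (a - ε) (a + ε)) ∩
        (Set.Icc (-s) 0 ∩ Set.Ioo (a - ε) (a + ε)))
      ≤ volume (Set.Ioo (a - ε) (a + ε)) + volume ({(0:ℝ)} : Set ℝ) :=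
        add_le_add (measure_mono hsub1) (measure_mono hsub2)
    _ = ENNReal.ofReal (2 * ε) := by
        rw [Real.volume_Ioo, Real.volume_singleton, add_zero]
        congr 1; ring

lemma volume_box {s : ℝ} (hs : 0 < s) :
    volume (Set.pi Set.univ fun _ : Fin d => Set.Icc (0 : ℝ) s) =
      (ENNReal.ofReal s) ^ d := by
  rw [volume_pi_pi]
  simp [Real.volume_Icc]

lemma boxMeasure_univ {s : ℝ} (hs : 0 < s) : boxMeasure d s Set.univ = 1 := by
  unfold boxMeasure
  rw [Measure.smul_apply, Measure.restrict_apply MeasurableSet.univ, Set.univ_inter,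
    volume_box hs, smul_eq_mul]
  exact ENNReal.inv_mul_cancel (pow_ne_zero _ (ENNReal.ofReal_pos.mpr hs).ne')
    (ENNReal.pow_ne_top ENNReal.ofReal_ne_top)

lemma boundary_int (hd : 1 ≤ d) {s ε : ℝ} (hε : 0 < ε) (hs : 2 * ε < s)
    (𝒟 : Measure (Euc d)) [IsProbabilityMeasure 𝒟] :
    ∫⁻ v, 𝒟 {x : Euc d | ∃ i, ∃ m : ℤ, |x i - v i - (m : ℝ) * s| < ε}
        ∂(boxMeasure d s) ≤ ENNReal.ofReal (d * (2 * ε / s)) := by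
  classical
  have hs0 : 0 < s := by linarith
  haveI : IsProbabilityMeasure (boxMeasure d s) := ⟨boxMeasure_univ hs0⟩
  set μ := boxMeasure d s with hμ
  set B : Set ((Fin d → ℝ) × Euc d) :=
    ⋃ (i : Fin d) (m : ℤ), {p : (Fin d → ℝ) × Euc d | |p.2 i - p.1 i - (m:ℝ)*s| < ε}
    with hB
  have hBmeas : MeasurableSet B := by
    refine MeasurableSet.iUnion fun i => MeasurableSet.iUnion fun m => ?_
    have hmf : Measurable fun p : (Fin d → ℝ) × Euc d => |p.2 i - p.1 i - (m:ℝ)*s| :=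
      ((((meas_eval d i).comp measurable_snd).sub
        ((measurable_pi_apply i).comp measurable_fst)).sub measurable_const).abs
    exact hmf measurableSet_Iio
  have hslice : ∀ v : Fin d → ℝ,
      {x : Euc d | ∃ i, ∃ m : ℤ, |x i - v i - (m:ℝ)*s| < ε} = {x : Euc d | (v, x) ∈ B} := by
    intro v; ext x
    simp only [hB, Set.mem_setOf_eq, Set.mem_iUnion]
  have h1 : ∀ v : Fin d → ℝ, 𝒟 {x : Euc d | (v, x) ∈ B} =
      ∫⁻ x, B.indicator (fun _ => (1:ℝ≥0∞)) (v, x) ∂𝒟 := by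
    intro v
    have hsm : MeasurableSet {x : Euc d | (v, x) ∈ B} :=
      measurable_prodMk_left hBmeas
    rw [← lintegral_indicator_one hsm]
    exact lintegral_congr fun a => by simp [Set.indicator_apply, Set.mem_setOf_eq]
  have hswap : ∫⁻ v, 𝒟 {x : Euc d | (v, x) ∈ B} ∂μ =
      ∫⁻ x, μ {v : Fin d → ℝ | (v, x) ∈ B} ∂𝒟 := by
    have hmeasB : Measurable (B.indicator fun _ => (1:ℝ≥0∞)) :=
      measurable_const.indicator hBmeas
    calc ∫⁻ v, 𝒟 {x : Euc d | (v, x) ∈ B} ∂μ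
        = ∫⁻ v, ∫⁻ x, B.indicator (fun _ => (1:ℝ≥0∞)) (v, x) ∂𝒟 ∂μ := by
          exact lintegral_congr fun v => h1 v
      _ = ∫⁻ x, ∫⁻ v, B.indicator (fun _ => (1:ℝ≥0∞)) (v, x) ∂μ ∂𝒟 :=
          lintegral_lintegral_swap hmeasB.aemeasurable
      _ = ∫⁻ x, μ {v : Fin d → ℝ | (v, x) ∈ B} ∂𝒟 := by
          refine lintegral_congr fun x => ?_
          have hsm : MeasurableSet {v : Fin d → ℝ | (v, x) ∈ B} :=
            measurable_prodMk_right hBmeas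
          rw [← lintegral_indicator_one hsm]
          exact lintegral_congr fun a => by simp [Set.indicator_apply, Set.mem_setOf_eq]
  have hper : ∀ (i : Fin d) (x : Euc d),
      μ ((fun v : Fin d → ℝ => v i) ⁻¹' {t : ℝ | ∃ m : ℤ, |x i - t - (m:ℝ)*s| < ε}) ≤
        ENNReal.ofReal (2 * ε / s) := by
    intro i x
    set c := x i with hc
    have hT : {t : ℝ | ∃ m : ℤ, |c - t - (m:ℝ)*s| < ε} =
        ⋃ m : ℤ, Set.Ioo (c - (m:ℝ)*s - ε) (c - (m:ℝ)*s + ε) := by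
      ext t
      simp only [Set.mem_setOf_eq, Set.mem_iUnion, Set.mem_Ioo, abs_lt]
      constructor
      · rintro ⟨m, h1', h2'⟩; exact ⟨m, by linarith, by linarith⟩
      · rintro ⟨m, h1', h2'⟩; exact ⟨m, by linarith, by linarith⟩
    have hTmeas : MeasurableSet {t : ℝ | ∃ m : ℤ, |c - t - (m:ℝ)*s| < ε} := by
      rw [hT]; exact MeasurableSet.iUnion fun m => measurableSet_Ioo
    have hSm : MeasurableSet
        ((fun v : Fin d → ℝ => v i) ⁻¹' {t : ℝ | ∃ m : ℤ, |c - t - (m:ℝ)*s| < ε}) :=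
      (measurable_pi_apply i) hTmeas
    rw [hμ]
    unfold boxMeasure
    rw [Measure.smul_apply, Measure.restrict_apply hSm, smul_eq_mul, volume_box hs0]
    set F : Fin d → Set ℝ := fun j =>
      if j = i then Set.Icc 0 s ∩ {t : ℝ | ∃ m : ℤ, |c - t - (m:ℝ)*s| < ε}
      else Set.Icc 0 s with hF
    have hsub : (fun v : Fin d → ℝ => v i) ⁻¹' {t : ℝ | ∃ m : ℤ, |c - t - (m:ℝ)*s| < ε} ∩
        (Set.pi Set.univ fun _ => Set.Icc (0:ℝ) s) ⊆ Set.pi Set.univ F := by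
      rintro v ⟨hv1, hv2⟩ j _
      rw [hF]
      by_cases hj : j = i
      · subst hj; simp only [if_pos rfl]; exact ⟨hv2 j (Set.mem_univ j), hv1⟩
      · simp only [if_neg hj]; exact hv2 j (Set.mem_univ j)
    have hvolF : volume (Set.pi Set.univ F) ≤
        ENNReal.ofReal (2 * ε) * (ENNReal.ofReal s) ^ (d - 1) := by
      rw [volume_pi_pi]
      rw [← Finset.mul_prod_erase Finset.univ _ (Finset.mem_univ i)]
      have he1 : volume (F i) ≤ ENNReal.ofReal (2 * ε) := by
        rw [hF]; simp only [if_pos rfl]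
        rw [hT]
        exact oneD c hε hs
      have he2 : ∏ j ∈ Finset.univ.erase i, volume (F j) = (ENNReal.ofReal s) ^ (d - 1) := by
        rw [Finset.prod_congr rfl (fun j hj => ?_)]
        · rw [Finset.prod_const, Finset.card_erase_of_mem (Finset.mem_univ i),
            Finset.card_univ, Fintype.card_fin]
        · rw [hF]
          simp only [if_neg (Finset.ne_of_mem_erase hj)]
          rw [Real.volume_Icc, sub_zero]
      rw [he2]
      exact mul_le_mul_left he1 _
    have harith : ((ENNReal.ofReal s) ^ d)⁻¹ *
        (ENNReal.ofReal (2 * ε) * (ENNReal.ofReal s) ^ (d - 1)) =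
        ENNReal.ofReal (2 * ε / s) := by
      set A := ENNReal.ofReal s with hA
      have hA0 : A ≠ 0 := (ENNReal.ofReal_pos.mpr hs0).ne'
      have hAt : A ≠ ⊤ := ENNReal.ofReal_ne_top
      have hgen : ∀ (z : ℝ≥0∞) (n : ℕ), (A ^ (n+1))⁻¹ * (z * A ^ n) = z * A⁻¹ := by
        intro z n
        rw [ENNReal.inv_pow, pow_succ]
        calc A⁻¹ ^ n * A⁻¹ * (z * A ^ n) = z * (A⁻¹ ^ n * A ^ n * A⁻¹) := by ring
          _ = z * ((A⁻¹ * A) ^ n * A⁻¹) := by rw [mul_pow]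
          _ = z * A⁻¹ := by rw [ENNReal.inv_mul_cancel hA0 hAt, one_pow, one_mul]
      have hpow : A ^ d = A ^ ((d - 1) + 1) := by rw [Nat.sub_add_cancel hd]
      rw [hpow, hgen, ENNReal.ofReal_div_of_pos hs0, div_eq_mul_inv]
    calc ((ENNReal.ofReal s) ^ d)⁻¹ *
          volume ((fun v : Fin d → ℝ => v i) ⁻¹' {t : ℝ | ∃ m : ℤ, |c - t - (m:ℝ)*s| < ε} ∩
            (Set.pi Set.univ fun _ => Set.Icc (0:ℝ) s))
        ≤ ((ENNReal.ofReal s) ^ d)⁻¹ * volume (Set.pi Set.univ F) :=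
          mul_le_mul_right (measure_mono hsub) _
      _ ≤ ((ENNReal.ofReal s) ^ d)⁻¹ *
          (ENNReal.ofReal (2 * ε) * (ENNReal.ofReal s) ^ (d - 1)) :=
          mul_le_mul_right hvolF _
      _ = ENNReal.ofReal (2 * ε / s) := harith
  have hslicebound : ∀ x : Euc d,
      μ {v : Fin d → ℝ | (v, x) ∈ B} ≤ ENNReal.ofReal ((d:ℝ) * (2 * ε / s)) := by
    intro x
    have hsub : {v : Fin d → ℝ | (v, x) ∈ B} ⊆
        ⋃ i : Fin d, (fun v : Fin d → ℝ => v i) ⁻¹'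
          {t : ℝ | ∃ m : ℤ, |x i - t - (m:ℝ)*s| < ε} := by
      intro v hv
      simp only [hB, Set.mem_setOf_eq, Set.mem_iUnion] at hv
      obtain ⟨i, m, him⟩ := hv
      exact Set.mem_iUnion.mpr ⟨i, ⟨m, him⟩⟩
    calc μ {v : Fin d → ℝ | (v, x) ∈ B}
        ≤ ∑' i : Fin d, μ ((fun v : Fin d → ℝ => v i) ⁻¹'
            {t : ℝ | ∃ m : ℤ, |x i - t - (m:ℝ)*s| < ε}) :=
          (measure_mono hsub).trans (measure_iUnion_le _)
      _ ≤ ∑' _i : Fin d, ENNReal.ofReal (2 * ε / s) :=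
          ENNReal.tsum_le_tsum fun i => hper i x
      _ = (d : ℝ≥0∞) * ENNReal.ofReal (2 * ε / s) := by
          rw [tsum_fintype]
          simp [Finset.sum_const, Finset.card_univ, nsmul_eq_mul]
      _ = ENNReal.ofReal ((d:ℝ) * (2 * ε / s)) := by
          rw [ENNReal.ofReal_mul (by positivity), ENNReal.ofReal_natCast]
  calc ∫⁻ v, 𝒟 {x : Euc d | ∃ i, ∃ m : ℤ, |x i - v i - (m:ℝ)*s| < ε} ∂μ
      = ∫⁻ v, 𝒟 {x : Euc d | (v, x) ∈ B} ∂μ := by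
        exact lintegral_congr fun v => by rw [hslice v]
    _ = ∫⁻ x, μ {v : Fin d → ℝ | (v, x) ∈ B} ∂𝒟 := hswap
    _ ≤ ∫⁻ _x, ENNReal.ofReal ((d:ℝ) * (2 * ε / s)) ∂𝒟 :=
        lintegral_mono fun x => hslicebound x
    _ = ENNReal.ofReal ((d:ℝ) * (2 * ε / s)) := by
        rw [lintegral_const, measure_univ, mul_one]

lemma sep_le_advRisk (𝒟 : Measure (Euc d)) (h : Euc d → ℝ) (hh : IsClassifier h)
    {f' : Euc d → ℝ} (hf' : IsClassifier f') {ε : ℝ} (hε : 0 < ε) :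
    sep 𝒟 h (2 * ε) ≤ advRisk 𝒟 h f' ε := by
  classical
  set E₀ := {x : Euc d | ∃ η : Euc d, ‖η‖ < ε ∧ f' (x + η) ≠ h x} with hE₀
  set E := toMeasurable 𝒟 E₀ with hE
  have hEm : MeasurableSet E := measurableSet_toMeasurable 𝒟 E₀
  have hE0sub : E₀ ⊆ E := subset_toMeasurable 𝒟 E₀
  have hsepE : ENNReal.ofReal (2 * ε) ≤ setEDist (h ⁻¹' {-1} \ E) (h ⁻¹' {1} \ E) := by
    refine le_iInf₂ fun a ha => le_iInf₂ fun b hb => ?_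
    rw [edist_dist]
    refine ENNReal.ofReal_le_ofReal ?_
    by_contra hc
    push_neg at hc
    have hna : ‖(2:ℝ)⁻¹ • (b - a)‖ < ε := by
      rw [norm_smul, Real.norm_eq_abs, show |(2:ℝ)⁻¹| = 2⁻¹ by norm_num]
      have hba : ‖b - a‖ < 2 * ε := by
        rw [← dist_eq_norm, dist_comm]; exact hc
      linarith
    have hnb : ‖(2:ℝ)⁻¹ • (a - b)‖ < ε := by
      rw [norm_smul, Real.norm_eq_abs, show |(2:ℝ)⁻¹| = 2⁻¹ by norm_num]
      have hab : ‖a - b‖ < 2 * ε := by rw [← dist_eq_norm]; exact hc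
      linarith
    have hmid : a + (2:ℝ)⁻¹ • (b - a) = b + (2:ℝ)⁻¹ • (a - b) := by module
    have hha : h a = -1 := ha.1
    have hhb : h b = 1 := hb.1
    rcases hf'.2 (a + (2:ℝ)⁻¹ • (b - a)) with hfm | hfm
    · refine ha.2 (hE0sub ⟨(2:ℝ)⁻¹ • (b - a), hna, ?_⟩)
      rw [hfm, hha]; norm_num
    · refine hb.2 (hE0sub ⟨(2:ℝ)⁻¹ • (a - b), hnb, ?_⟩)
      rw [← hmid, hfm, hhb]; norm_num
  calc sep 𝒟 h (2 * ε) ≤ 𝒟 E :=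
        iInf_le_of_le E (iInf_le_of_le hEm (iInf_le _ hsepE))
    _ = 𝒟 E₀ := measure_toMeasurable E₀
    _ = advRisk 𝒟 h f' ε := rfl

lemma sep_le_one (𝒟 : Measure (Euc d)) [IsProbabilityMeasure 𝒟] (h : Euc d → ℝ)
    (r : ℝ) : sep 𝒟 h r ≤ 1 := by
  have h1 : sep 𝒟 h r ≤ 𝒟 Set.univ := by
    refine iInf_le_of_le Set.univ (iInf_le_of_le MeasurableSet.univ (iInf_le_of_le ?_ le_rfl))
    have he : (h ⁻¹' {-1} \ Set.univ) = ∅ := by simp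
    rw [he]
    unfold setEDist
    simp
  simpa [measure_univ] using h1

end Stmt13
/-- Theorem 1 (cube partitions): let `(𝒟, h)` be a separable binary
classification task on `ℝ^d` (`d ≥ 1`), `f` a measurable classifier, `ε > 0`,
`β > 2√d`, and let `g_v` be the smoothed classifier obtained from the cube
partition of `ℝ^d` with parameter `εβ` (cubes of side `εβ/√d`) and uniformly
random shift `v ∈ [0, εβ/√d]^d`.  Then
`𝔼_v[AR(g_v, ε)] ≤ 2·S(εβ) + 2·R(f) + 2d^{3/2}/β`, and moreover, if
`AR(ε) > 0`, then
`𝔼_v[AR(g_v, ε)] ≤ (2·S(εβ)/S(2ε))·AR(ε) + 2·R(f) + 2d^{3/2}/β`. -/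
theorem stmt13 (d : ℕ) (hd : 1 ≤ d) (𝒟 : Measure (Euc d))
    [IsProbabilityMeasure 𝒟]
    (h : Euc d → ℝ) (hh : IsClassifier h)
    (f : Euc d → ℝ) (hf : IsClassifier f)
    (ε β : ℝ) (hε : 0 < ε) (hβ : 2 * Real.sqrt d < β)
    (g : (Fin d → ℝ) → Euc d → ℝ) (hg : ∀ v, IsClassifier (g v))
    (hsmooth : ∀ (v : Fin d → ℝ) (x : Euc d),
      𝒟 (cubeBlock d (ε * β / Real.sqrt d) v x) ≠ 0 →
      g v x = smoothVal 𝒟 f (cubeBlock d (ε * β / Real.sqrt d) v x)) :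
    (∫⁻ v, advRisk 𝒟 h (g v) ε ∂(boxMeasure d (ε * β / Real.sqrt d))) ≤
        2 * sep 𝒟 h (ε * β) + 2 * risk 𝒟 h f +
          ENNReal.ofReal (2 * (d : ℝ) ^ ((3 : ℝ) / 2) / β) ∧
      (0 < optAdvRisk 𝒟 h ε →
        (∫⁻ v, advRisk 𝒟 h (g v) ε ∂(boxMeasure d (ε * β / Real.sqrt d))) ≤
          2 * sep 𝒟 h (ε * β) / sep 𝒟 h (2 * ε) * optAdvRisk 𝒟 h ε +
            2 * risk 𝒟 h f +
            ENNReal.ofReal (2 * (d : ℝ) ^ ((3 : ℝ) / 2) / β)) := by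

  classical
  open Stmt13 in
  have hd0 : (0:ℝ) < d := by exact_mod_cast hd
  have hsqd : 0 < Real.sqrt d := Real.sqrt_pos.mpr hd0
  have hsqd1 : 1 ≤ Real.sqrt d := by
    rw [show (1:ℝ) = Real.sqrt 1 by simp]
    exact Real.sqrt_le_sqrt (by exact_mod_cast hd)
  have hβ0 : 0 < β := lt_trans (by positivity) hβ
  set s := ε * β / Real.sqrt d with hs
  have hs0 : 0 < s := by positivity
  have h2εs : 2 * ε < s := by
    rw [hs, lt_div_iff₀ hsqd]
    nlinarith
  have hsd : s * Real.sqrt d = ε * β := by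
    rw [hs]; field_simp
  set C := ENNReal.ofReal (2 * (d : ℝ) ^ ((3 : ℝ) / 2) / β) with hC
  have hd32 : (d:ℝ) ^ ((3:ℝ)/2) = d * Real.sqrt d := by
    rw [show ((3:ℝ)/2) = 1 + 1/2 by norm_num, Real.rpow_add hd0, Real.rpow_one,
      Real.sqrt_eq_rpow]
  have hCconv : ENNReal.ofReal ((d:ℝ) * (2 * ε / s)) = C := by
    rw [hC]
    congr 1
    rw [hd32, hs]
    field_simp
  haveI : IsProbabilityMeasure (boxMeasure d s) := ⟨Stmt13.boxMeasure_univ hs0⟩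
  have main : ∀ E : Set (Euc d), MeasurableSet E →
      ENNReal.ofReal (ε * β) ≤ setEDist (h ⁻¹' {-1} \ E) (h ⁻¹' {1} \ E) →
      (∫⁻ v, advRisk 𝒟 h (g v) ε ∂(boxMeasure d s)) ≤
        C + (2 * 𝒟 E + 2 * risk 𝒟 h f) := by
    intro E hEm hEsep
    have hEsep' : ENNReal.ofReal (s * Real.sqrt d) ≤
        setEDist (h ⁻¹' {-1} \ E) (h ⁻¹' {1} \ E) := by rw [hsd]; exact hEsep
    calc (∫⁻ v, advRisk 𝒟 h (g v) ε ∂(boxMeasure d s))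
        ≤ ∫⁻ v, (𝒟 {x : Euc d | ∃ i, ∃ m : ℤ, |x i - v i - (m:ℝ)*s| < ε}
            + (2 * 𝒟 E + 2 * risk 𝒟 h f)) ∂(boxMeasure d s) :=
          lintegral_mono fun v =>
            Stmt13.perv_bound 𝒟 hd hh hf hε hs0 hEm hEsep' v (hsmooth v)
      _ = (∫⁻ v, 𝒟 {x : Euc d | ∃ i, ∃ m : ℤ, |x i - v i - (m:ℝ)*s| < ε}
            ∂(boxMeasure d s)) + (2 * 𝒟 E + 2 * risk 𝒟 h f) := by
          rw [lintegral_add_right _ measurable_const, lintegral_const, measure_univ,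
            mul_one]
      _ ≤ ENNReal.ofReal ((d:ℝ) * (2 * ε / s)) + (2 * 𝒟 E + 2 * risk 𝒟 h f) :=
          add_le_add_left (Stmt13.boundary_int hd hε h2εs 𝒟) _
      _ = C + (2 * 𝒟 E + 2 * risk 𝒟 h f) := by rw [hCconv]
  have hsep_ne_top : sep 𝒟 h (ε * β) ≠ ⊤ :=
    ((Stmt13.sep_le_one 𝒟 h (ε * β)).trans_lt (by norm_num)).ne
  have goal1 : (∫⁻ v, advRisk 𝒟 h (g v) ε ∂(boxMeasure d s)) ≤
      2 * sep 𝒟 h (ε * β) + 2 * risk 𝒟 h f + C := by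
    refine ENNReal.le_of_forall_pos_le_add fun δ hδ _hfin => ?_
    have hδ2 : ((δ : ℝ≥0∞) / 2) ≠ 0 :=
      ENNReal.div_ne_zero.mpr ⟨by exact_mod_cast hδ.ne', by norm_num⟩
    have hsep_lt : sep 𝒟 h (ε * β) < sep 𝒟 h (ε * β) + (δ : ℝ≥0∞) / 2 :=
      ENNReal.lt_add_right hsep_ne_top hδ2
    have hsep_lt' := hsep_lt
    rw [sep] at hsep_lt'
    obtain ⟨E, hE1⟩ := iInf_lt_iff.mp hsep_lt'
    obtain ⟨hEm, hE2⟩ := iInf_lt_iff.mp hE1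
    obtain ⟨hEsep, hElt⟩ := iInf_lt_iff.mp hE2
    calc (∫⁻ v, advRisk 𝒟 h (g v) ε ∂(boxMeasure d s))
        ≤ C + (2 * 𝒟 E + 2 * risk 𝒟 h f) := main E hEm hEsep
      _ ≤ C + (2 * (sep 𝒟 h (ε * β) + (δ : ℝ≥0∞) / 2) + 2 * risk 𝒟 h f) := by
          exact add_le_add_right (add_le_add_left (mul_le_mul_right hElt.le 2) _) _
      _ = 2 * sep 𝒟 h (ε * β) + 2 * risk 𝒟 h f + C + δ := by
          rw [mul_add, ENNReal.mul_div_cancel' (by norm_num) (by norm_num)]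
          ring
  refine ⟨goal1, fun hpos => ?_⟩
  have hARopt : sep 𝒟 h (2 * ε) ≤ optAdvRisk 𝒟 h ε :=
    le_iInf fun f' => le_iInf fun hf' => Stmt13.sep_le_advRisk 𝒟 h hh hf' hε
  have key : 2 * sep 𝒟 h (ε * β) ≤
      2 * sep 𝒟 h (ε * β) / sep 𝒟 h (2 * ε) * optAdvRisk 𝒟 h ε := by
    by_cases h0 : sep 𝒟 h (ε * β) = 0
    · rw [h0]; simp
    by_cases h20 : sep 𝒟 h (2 * ε) = 0
    · rw [h20, ENNReal.div_zero (mul_ne_zero (by norm_num) h0),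
        ENNReal.top_mul hpos.ne']
      exact le_top
    · have h2top : sep 𝒟 h (2 * ε) ≠ ⊤ :=
        ((Stmt13.sep_le_one 𝒟 h (2 * ε)).trans_lt (by norm_num)).ne
      calc 2 * sep 𝒟 h (ε * β)
          = 2 * sep 𝒟 h (ε * β) / sep 𝒟 h (2 * ε) * sep 𝒟 h (2 * ε) :=
            (ENNReal.div_mul_cancel h20 h2top).symm
        _ ≤ _ := mul_le_mul_right hARopt _
  exact goal1.trans (add_le_add_left (add_le_add_left key _) _)
end
end
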